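/- Consistency of the lifted Paxos model: if initL →SDPL* (ctr, (msgs, maxBal, maxVal)) and both Chosen(msgs, v1) and Chosen(msgs, v2) hold, then v1 = v2. -/
import Mathlib


/-- Messages of the single-decree Paxos model. -/
inductive M (A V : Type) where
  | msg1a (b : ℕ)
  | msg1b (a : A) (b : ℕ) (w : Option (ℕ × V))
  | msg2a (b : ℕ) (v : V)
  | msg2b (a : A) (b : ℕ) (v : V)

/-- An SDP state: sent messages, per-acceptor maximal ballot, per-acceptor last accepted value. -/
abbrev SDPState (A V : Type) := Set (M A V) × (A → Option ℕ) × (A → Option (ℕ × V))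

/-- The initial SDP state. -/
def SDPInit (A V : Type) : SDPState A V := (∅, fun _ => none, fun _ => none)

/-- `none <ᵒ b` always; `some b0 <ᵒ b` iff `b0 < b`. -/
def optLT : Option ℕ → ℕ → Prop
  | none, _ => True
  | some b0, b => b0 < b

/-- `none ≤ᵒ b` always; `some b0 ≤ᵒ b` iff `b0 ≤ b`. -/
def optLE : Option ℕ → ℕ → Prop
  | none, _ => True
  | some b0, b => b0 ≤ b

/-- The 1b-messages with a reported accepted value, for ballot `b` from members of `Q`. -/
def Q1bv {A V : Type} (msgs : Set (M A V)) (Q : Set A) (b : ℕ) : Set (M A V) :=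
  { m | m ∈ msgs ∧ ∃ a ∈ Q, ∃ p : ℕ × V, m = M.msg1b a b (some p) }

/-- Every acceptor in `Q` has sent a 1b-message for ballot `b`. -/
def HavePromised {A V : Type} (msgs : Set (M A V)) (Q : Set A) (b : ℕ) : Prop :=
  ∀ a ∈ Q, ∃ w, M.msg1b a b w ∈ msgs

/-- `v` is the value with maximal reported ballot among the 1b-messages for `b` from `Q`. -/
def IsMaxVote {A V : Type} (msgs : Set (M A V)) (Q : Set A) (b : ℕ) (v : V) : Prop :=
  ∃ (a0 : A) (b0 : ℕ),
    M.msg1b a0 b (some (b0, v)) ∈ Q1bv msgs Q b ∧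
    ∀ m' ∈ Q1bv msgs Q b, ∃ a' b' v', m' = M.msg1b a' b (some (b', v')) ∧ b' ≤ b0

/-- Proposing `v` at ballot `b` is safe, as witnessed by quorum `Q`. -/
def ShowsSafeAt {A V : Type} (msgs : Set (M A V)) (Q : Set A) (b : ℕ) (v : V) : Prop :=
  HavePromised msgs Q b ∧ (Q1bv msgs Q b = ∅ ∨ IsMaxVote msgs Q b v)

/-- The transition relation of the single-decree Paxos model. -/
inductive SDPStep {A V : Type} [DecidableEq A] (Quorum : Set A → Prop) :
    SDPState A V → SDPState A V → Prop where
  | phase1a (msgs : Set (M A V)) (mb : A → Option ℕ) (mv : A → Option (ℕ × V)) (b : ℕ) :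
      SDPStep Quorum (msgs, mb, mv) (msgs ∪ {M.msg1a b}, mb, mv)
  | phase1b (msgs : Set (M A V)) (mb : A → Option ℕ) (mv : A → Option (ℕ × V))
      (a : A) (b : ℕ)
      (h1 : M.msg1a b ∈ msgs) (h2 : optLT (mb a) b) :
      SDPStep Quorum (msgs, mb, mv)
        (msgs ∪ {M.msg1b a b (mv a)}, Function.update mb a (some b), mv)
  | phase2a (msgs : Set (M A V)) (mb : A → Option ℕ) (mv : A → Option (ℕ × V))
      (b : ℕ) (v : V) (Q : Set A)
      (h1 : ¬ ∃ v', M.msg2a b v' ∈ msgs) (h2 : Quorum Q)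
      (h3 : ShowsSafeAt msgs Q b v) :
      SDPStep Quorum (msgs, mb, mv) (msgs ∪ {M.msg2a b v}, mb, mv)
  | phase2b (msgs : Set (M A V)) (mb : A → Option ℕ) (mv : A → Option (ℕ × V))
      (a : A) (b : ℕ) (v : V)
      (h1 : M.msg2a b v ∈ msgs) (h2 : optLE (mb a) b) :
      SDPStep Quorum (msgs, mb, mv)
        (msgs ∪ {M.msg2b a b v}, Function.update mb a (some b),
          Function.update mv a (some (b, v)))

/-- A value `v` is chosen: a quorum of acceptors have sent `msg2b` for `v` at some ballot. -/
def Chosen {A V : Type} (Quorum : Set A → Prop) (msgs : Set (M A V)) (v : V) : Prop :=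
  ∃ (b : ℕ) (Q : Set A), Quorum Q ∧ ∀ a ∈ Q, M.msg2b a b v ∈ msgs

/-- The transition relation of the lifted single-decree Paxos model over `n` proposers. -/
inductive SDPLStep {A V : Type} [DecidableEq A] (Quorum : Set A → Prop) (n : ℕ) :
    ((Fin n → ℕ) × SDPState A V) → ((Fin n → ℕ) × SDPState A V) → Prop where
  | inc (ctr : Fin n → ℕ) (s : SDPState A V) (p : Fin n) :
      SDPLStep Quorum n (ctr, s) (Function.update ctr p (ctr p + 1), s)
  | ruleA (ctr : Fin n → ℕ) (msgs : Set (M A V)) (mb : A → Option ℕ)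
      (mv : A → Option (ℕ × V)) (m : M A V) (p : Fin n) (k : ℕ)
      (hstep : SDPStep Quorum (msgs, mb, mv) (msgs ∪ {m}, mb, mv))
      (hk : ctr p = k)
      (hm : m = M.msg1a (k * n + p.val) ∨ ∃ v, m = M.msg2a (k * n + p.val) v) :
      SDPLStep Quorum n (ctr, (msgs, mb, mv)) (ctr, (msgs ∪ {m}, mb, mv))
  | ruleB (ctr : Fin n → ℕ) (msgs : Set (M A V)) (mb mb' : A → Option ℕ)
      (mv mv' : A → Option (ℕ × V)) (m : M A V)
      (hstep : SDPStep Quorum (msgs, mb, mv) (msgs ∪ {m}, mb', mv'))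
      (hm : (∃ a b w, m = M.msg1b a b w) ∨ (∃ a b v, m = M.msg2b a b v)) :
      SDPLStep Quorum n (ctr, (msgs, mb, mv)) (ctr, (msgs ∪ {m}, mb', mv'))

/-- The initial state of the lifted single-decree Paxos model. -/
def SDPLInit (A V : Type) (n : ℕ) : (Fin n → ℕ) × SDPState A V :=
  (fun _ => 0, SDPInit A V)

section PaxosAux

variable {A V : Type} [DecidableEq A]

/-- `mb a` is defined and at least `b`. -/
def mbGE (mb : A → Option ℕ) (a : A) (b : ℕ) : Prop := ∃ bb, mb a = some bb ∧ b ≤ bb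

lemma optLT_some_lt {o : Option ℕ} {b c : ℕ} (h : optLT o b) (ho : o = some c) : c < b := by
  subst ho; exact h

lemma optLE_some_le {o : Option ℕ} {b c : ℕ} (h : optLE o b) (ho : o = some c) : c ≤ b := by
  subst ho; exact h

/-- Acceptor `a` has not voted at ballot `b` and never will. -/
def WontVote (s : SDPState A V) (a : A) (b : ℕ) : Prop :=
  (∀ v, M.msg2b a b v ∉ s.1) ∧ mbGE s.2.1 a (b + 1)

/-- `v` is safe at ballot `b`. -/
def SafeAt (Quorum : Set A → Prop) (s : SDPState A V) (b : ℕ) (v : V) : Prop :=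
  ∀ b' < b, ∃ Q, Quorum Q ∧ ∀ a ∈ Q, M.msg2b a b' v ∈ s.1 ∨ WontVote s a b'

/-- The inductive invariant for the SDP model. -/
structure PaxInv (Quorum : Set A → Prop) (s : SDPState A V) : Prop where
  i1 : ∀ a b w, M.msg1b a b w ∈ s.1 →
    mbGE s.2.1 a b ∧
    (∀ b0 v0, w = some (b0, v0) → M.msg2b a b0 v0 ∈ s.1 ∧ b0 < b ∧
      ∀ b'' v'', b0 < b'' → b'' < b → M.msg2b a b'' v'' ∉ s.1) ∧
    (w = none → ∀ b'' v'', b'' < b → M.msg2b a b'' v'' ∉ s.1)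
  i1u : ∀ a b w w', M.msg1b a b w ∈ s.1 → M.msg1b a b w' ∈ s.1 → w = w'
  i2a : ∀ b v, M.msg2a b v ∈ s.1 → SafeAt Quorum s b v
  i2au : ∀ b v v', M.msg2a b v ∈ s.1 → M.msg2a b v' ∈ s.1 → v = v'
  i2b : ∀ a b v, M.msg2b a b v ∈ s.1 → M.msg2a b v ∈ s.1 ∧ mbGE s.2.1 a b
  imvn : ∀ a, s.2.2 a = none → ∀ b v, M.msg2b a b v ∉ s.1
  imvs : ∀ a b v, s.2.2 a = some (b, v) → M.msg2b a b v ∈ s.1 ∧ mbGE s.2.1 a b ∧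
    ∀ b'' v'', b < b'' → M.msg2b a b'' v'' ∉ s.1

variable {Quorum : Set A → Prop}

lemma step_msgs_mono {s s' : SDPState A V} (h : SDPStep Quorum s s') : s.1 ⊆ s'.1 := by
  cases h <;> exact Set.subset_union_left

lemma step_mbGE {s s' : SDPState A V} (h : SDPStep Quorum s s') {a : A} {b : ℕ}
    (hg : mbGE s.2.1 a b) : mbGE s'.2.1 a b := by
  cases h with
  | phase1a => exact hg
  | phase2a => exact hg
  | phase1b msgs mb mv a0 b0 h1 h2 =>
      obtain ⟨bb, hbb, hle⟩ := hg
      by_cases hea : a = a0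
      · subst hea
        refine ⟨b0, by simp, ?_⟩
        have := optLT_some_lt h2 hbb
        omega
      · exact ⟨bb, by simpa [Function.update_apply, hea] using hbb, hle⟩
  | phase2b msgs mb mv a0 b0 v0 h1 h2 =>
      obtain ⟨bb, hbb, hle⟩ := hg
      by_cases hea : a = a0
      · subst hea
        refine ⟨b0, by simp, ?_⟩
        have := optLE_some_le h2 hbb
        omega
      · exact ⟨bb, by simpa [Function.update_apply, hea] using hbb, hle⟩

lemma step_wontVote {s s' : SDPState A V} (h : SDPStep Quorum s s') {a : A} {b : ℕ}
    (hw : WontVote s a b) : WontVote s' a b := by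
  refine ⟨?_, step_mbGE h hw.2⟩
  intro v hv
  cases h with
  | phase1a msgs mb mv b0 =>
      rcases hv with hv | hv
      · exact hw.1 v hv
      · simp at hv
  | phase1b msgs mb mv a0 b0 h1 h2 =>
      rcases hv with hv | hv
      · exact hw.1 v hv
      · simp at hv
  | phase2a msgs mb mv b0 v0 Q h1 h2 h3 =>
      rcases hv with hv | hv
      · exact hw.1 v hv
      · simp at hv
  | phase2b msgs mb mv a0 b0 v0 h1 h2 =>
      rcases hv with hv | hv
      · exact hw.1 v hv
      · simp only [Set.mem_singleton_iff, M.msg2b.injEq] at hv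
        obtain ⟨rfl, rfl, rfl⟩ := hv
        obtain ⟨bb, hbb, hle⟩ := hw.2
        have := optLE_some_le h2 hbb
        omega

lemma step_safeAt {s s' : SDPState A V} (h : SDPStep Quorum s s') {b : ℕ} {v : V}
    (hs : SafeAt Quorum s b v) : SafeAt Quorum s' b v := by
  intro b' hb'
  obtain ⟨Q, hQ, hall⟩ := hs b' hb'
  refine ⟨Q, hQ, fun a ha => ?_⟩
  rcases hall a ha with hv | hw
  · exact Or.inl (step_msgs_mono h hv)
  · exact Or.inr (step_wontVote h hw)

lemma showsSafe_safeAt {s : SDPState A V}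
    (hQ : ∀ Q1 Q2 : Set A, Quorum Q1 → Quorum Q2 → ∃ a, a ∈ Q1 ∧ a ∈ Q2)
    (hinv : PaxInv Quorum s) {Q : Set A} {b : ℕ} {v : V}
    (hq : Quorum Q) (hss : ShowsSafeAt s.1 Q b v) : SafeAt Quorum s b v := by
  obtain ⟨hprom, hcase⟩ := hss
  intro b' hb'
  rcases hcase with hemp | hmax
  · -- no reported votes from Q: everyone in Q won't vote below b
    refine ⟨Q, hq, fun a ha => Or.inr ?_⟩
    obtain ⟨w, hw⟩ := hprom a ha
    have hwn : w = none := by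
      cases w with
      | none => rfl
      | some p =>
          exfalso
          have : M.msg1b a b (some p) ∈ Q1bv s.1 Q b := ⟨hw, a, ha, p, rfl⟩
          simp [hemp] at this
    subst hwn
    obtain ⟨hmb, _, hnone⟩ := hinv.i1 a b none hw
    refine ⟨fun v' hv' => hnone rfl b' v' hb' hv', ?_⟩
    obtain ⟨bb, hbb, hle⟩ := hmb
    exact ⟨bb, hbb, by omega⟩
  · obtain ⟨a0, b0, hmem, hmaxv⟩ := hmax
    have hmem' : M.msg1b a0 b (some (b0, v)) ∈ s.1 := hmem.1
    obtain ⟨_, hsome, _⟩ := hinv.i1 a0 b (some (b0, v)) hmem'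
    obtain ⟨hvoted0, hb0b, _⟩ := hsome b0 v rfl
    have h2a0 : M.msg2a b0 v ∈ s.1 := (hinv.i2b a0 b0 v hvoted0).1
    have hsafe0 : SafeAt Quorum s b0 v := hinv.i2a b0 v h2a0
    rcases lt_or_ge b' b0 with hlt | hge
    · exact hsafe0 b' hlt
    · -- b0 ≤ b' < b
      refine ⟨Q, hq, fun a ha => ?_⟩
      obtain ⟨w, hw⟩ := hprom a ha
      cases w with
      | none =>
          obtain ⟨hmb, _, hnone⟩ := hinv.i1 a b none hw
          refine Or.inr ⟨fun v' hv' => hnone rfl b' v' hb' hv', ?_⟩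
          obtain ⟨bb, hbb, hle⟩ := hmb
          exact ⟨bb, hbb, by omega⟩
      | some p =>
          obtain ⟨ba, va⟩ := p
          have hmemQ : M.msg1b a b (some (ba, va)) ∈ Q1bv s.1 Q b := ⟨hw, a, ha, _, rfl⟩
          obtain ⟨a', b'', v'', heq, hle0⟩ := hmaxv _ hmemQ
          have hba : ba ≤ b0 := by
            simp only [M.msg1b.injEq, Option.some.injEq, Prod.mk.injEq] at heq
            obtain ⟨_, _, rfl, _⟩ := heq
            exact hle0
          obtain ⟨hmb, hsome', _⟩ := hinv.i1 a b (some (ba, va)) hw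
          obtain ⟨hvoteda, hbab, hgap⟩ := hsome' ba va rfl
          have hmb' : mbGE s.2.1 a (b' + 1) := by
            obtain ⟨bb, hbb, hle⟩ := hmb
            exact ⟨bb, hbb, by omega⟩
          rcases lt_or_eq_of_le hba with hbalt | hbae
          · -- ba < b0 ≤ b' : no vote at b'
            exact Or.inr ⟨fun v' hv' => hgap b' v' (by omega) hb' hv', hmb'⟩
          · rcases lt_or_eq_of_le hge with hb0lt | hb0e
            · -- b0 < b' : ba = b0 < b', gap
              exact Or.inr ⟨fun v' hv' => hgap b' v' (by omega) hb' hv', hmb'⟩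
            · -- b' = b0 = ba : a voted va at b0, and va = v by 2a uniqueness
              subst hbae hb0e
              have h2aa : M.msg2a ba va ∈ s.1 := (hinv.i2b a ba va hvoteda).1
              have : va = v := hinv.i2au ba va v h2aa h2a0
              subst this
              exact Or.inl hvoteda

lemma paxInv_preserved {s s' : SDPState A V} (hQ : ∀ Q1 Q2 : Set A, Quorum Q1 → Quorum Q2 →
      ∃ a, a ∈ Q1 ∧ a ∈ Q2)
    (h : SDPStep Quorum s s') (hinv : PaxInv Quorum s) : PaxInv Quorum s' := by
  cases h with
  | phase1a msgs mb mv b =>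
      constructor
      · intro a b' w hw
        rcases hw with hw | hw
        · obtain ⟨h1, h2, h3⟩ := hinv.i1 a b' w hw
          exact ⟨h1, fun b0 v0 he => by
              obtain ⟨x1, x2, x3⟩ := h2 b0 v0 he
              exact ⟨Or.inl x1, x2, fun b'' v'' hg1 hg2 hv => by
                rcases hv with hv | hv
                · exact x3 b'' v'' hg1 hg2 hv
                · simp at hv⟩,
            fun he b'' v'' hlt hv => by
              rcases hv with hv | hv
              · exact h3 he b'' v'' hlt hv
              · simp at hv⟩
        · simp at hw
      · intro a b' w w' hw hw'
        rcases hw with hw | hw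
        · rcases hw' with hw' | hw'
          · exact hinv.i1u a b' w w' hw hw'
          · simp at hw'
        · simp at hw
      · intro b' v hv
        rcases hv with hv | hv
        · exact step_safeAt (SDPStep.phase1a msgs mb mv b) (hinv.i2a b' v hv)
        · simp at hv
      · intro b' v v' hv hv'
        rcases hv with hv | hv
        · rcases hv' with hv' | hv'
          · exact hinv.i2au b' v v' hv hv'
          · simp at hv'
        · simp at hv
      · intro a b' v hv
        rcases hv with hv | hv
        · obtain ⟨x1, x2⟩ := hinv.i2b a b' v hv
          exact ⟨Or.inl x1, x2⟩
        · simp at hv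
      · intro a ha b' v hv
        rcases hv with hv | hv
        · exact hinv.imvn a ha b' v hv
        · simp at hv
      · intro a b' v ha
        obtain ⟨x1, x2, x3⟩ := hinv.imvs a b' v ha
        exact ⟨Or.inl x1, x2, fun b'' v'' hgt hv => by
          rcases hv with hv | hv
          · exact x3 b'' v'' hgt hv
          · simp at hv⟩
  | phase1b msgs mb mv a0 b0 h1 h2 =>
      have hstep := SDPStep.phase1b (Quorum := Quorum) msgs mb mv a0 b0 h1 h2
      have hmbg : ∀ a b, mbGE mb a b → mbGE (Function.update mb a0 (some b0)) a b :=
        fun a b hg => step_mbGE hstep hg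
      constructor
      · intro a b w hw
        rcases hw with hw | hw
        · obtain ⟨x1, x2, x3⟩ := hinv.i1 a b w hw
          exact ⟨hmbg a b x1, fun bv v0 he => by
              obtain ⟨y1, y2, y3⟩ := x2 bv v0 he
              exact ⟨Or.inl y1, y2, fun b'' v'' hg1 hg2 hv => by
                rcases hv with hv | hv
                · exact y3 b'' v'' hg1 hg2 hv
                · simp at hv⟩,
            fun he b'' v'' hlt hv => by
              rcases hv with hv | hv
              · exact x3 he b'' v'' hlt hv
              · simp at hv⟩
        · simp only [Set.mem_singleton_iff, M.msg1b.injEq] at hw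
          obtain ⟨rfl, rfl, rfl⟩ := hw
          refine ⟨⟨b, by simp, le_refl _⟩, ?_, ?_⟩
          · intro bv v0 he
            obtain ⟨x1, x2, x3⟩ := hinv.imvs a bv v0 he
            refine ⟨Or.inl x1, ?_, ?_⟩
            · obtain ⟨bb, hbb, hle⟩ := x2
              have := optLT_some_lt h2 hbb
              omega
            · intro b'' v'' hg1 hg2 hv
              rcases hv with hv | hv
              · exact x3 b'' v'' hg1 hv
              · simp at hv
          · intro he b'' v'' hlt hv
            rcases hv with hv | hv
            · exact hinv.imvn a he b'' v'' hv
            · simp at hv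
      · intro a b w w' hw hw'
        have key : ∀ w₁ w₂, M.msg1b a b w₁ ∈ msgs →
            M.msg1b a b w₂ ∈ ({M.msg1b a0 b0 (mv a0)} : Set (M A V)) → False := by
          intro w₁ w₂ hin hsing
          simp only [Set.mem_singleton_iff, M.msg1b.injEq] at hsing
          obtain ⟨rfl, rfl, -⟩ := hsing
          obtain ⟨⟨bb, hbb, hle⟩, -, -⟩ := hinv.i1 a b w₁ hin
          have := optLT_some_lt h2 hbb
          omega
        rcases hw with hw | hw
        · rcases hw' with hw' | hw'
          · exact hinv.i1u a b w w' hw hw'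
          · exact (key w w' hw hw').elim
        · rcases hw' with hw' | hw'
          · exact (key w' w hw' hw).elim
          · simp only [Set.mem_singleton_iff, M.msg1b.injEq] at hw hw'
            rw [hw.2.2, hw'.2.2]
      · intro b v hv
        rcases hv with hv | hv
        · exact step_safeAt hstep (hinv.i2a b v hv)
        · simp at hv
      · intro b v v' hv hv'
        rcases hv with hv | hv
        · rcases hv' with hv' | hv'
          · exact hinv.i2au b v v' hv hv'
          · simp at hv'
        · simp at hv
      · intro a b v hv
        rcases hv with hv | hv
        · obtain ⟨x1, x2⟩ := hinv.i2b a b v hv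
          exact ⟨Or.inl x1, hmbg a b x2⟩
        · simp at hv
      · intro a ha b v hv
        rcases hv with hv | hv
        · exact hinv.imvn a ha b v hv
        · simp at hv
      · intro a b v ha
        obtain ⟨x1, x2, x3⟩ := hinv.imvs a b v ha
        exact ⟨Or.inl x1, hmbg a b x2, fun b'' v'' hgt hv => by
          rcases hv with hv | hv
          · exact x3 b'' v'' hgt hv
          · simp at hv⟩
  | phase2a msgs mb mv b v Q hna hq hss =>
      have hstep := SDPStep.phase2a (Quorum := Quorum) msgs mb mv b v Q hna hq hss
      constructor
      · intro a b' w hw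
        rcases hw with hw | hw
        · obtain ⟨x1, x2, x3⟩ := hinv.i1 a b' w hw
          exact ⟨x1, fun b0 v0 he => by
              obtain ⟨y1, y2, y3⟩ := x2 b0 v0 he
              exact ⟨Or.inl y1, y2, fun b'' v'' hg1 hg2 hv => by
                rcases hv with hv | hv
                · exact y3 b'' v'' hg1 hg2 hv
                · simp at hv⟩,
            fun he b'' v'' hlt hv => by
              rcases hv with hv | hv
              · exact x3 he b'' v'' hlt hv
              · simp at hv⟩
        · simp at hw
      · intro a b' w w' hw hw'
        rcases hw with hw | hw
        · rcases hw' with hw' | hw'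
          · exact hinv.i1u a b' w w' hw hw'
          · simp at hw'
        · simp at hw
      · intro b' v' hv
        rcases hv with hv | hv
        · exact step_safeAt hstep (hinv.i2a b' v' hv)
        · simp only [Set.mem_singleton_iff, M.msg2a.injEq] at hv
          obtain ⟨rfl, rfl⟩ := hv
          exact step_safeAt hstep (showsSafe_safeAt hQ hinv hq hss)
      · intro b' v' v'' hv hv'
        rcases hv with hv | hv
        · rcases hv' with hv' | hv'
          · exact hinv.i2au b' v' v'' hv hv'
          · simp only [Set.mem_singleton_iff, M.msg2a.injEq] at hv'
            obtain ⟨rfl, rfl⟩ := hv'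
            exact absurd ⟨v', hv⟩ hna
        · rcases hv' with hv' | hv'
          · simp only [Set.mem_singleton_iff, M.msg2a.injEq] at hv
            obtain ⟨rfl, rfl⟩ := hv
            exact absurd ⟨v'', hv'⟩ hna
          · simp only [Set.mem_singleton_iff, M.msg2a.injEq] at hv hv'
            rw [hv.2, hv'.2]
      · intro a b' v' hv
        rcases hv with hv | hv
        · obtain ⟨x1, x2⟩ := hinv.i2b a b' v' hv
          exact ⟨Or.inl x1, x2⟩
        · simp at hv
      · intro a ha b' v' hv
        rcases hv with hv | hv
        · exact hinv.imvn a ha b' v' hv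
        · simp at hv
      · intro a b' v' ha
        obtain ⟨x1, x2, x3⟩ := hinv.imvs a b' v' ha
        exact ⟨Or.inl x1, x2, fun b'' v'' hgt hv => by
          rcases hv with hv | hv
          · exact x3 b'' v'' hgt hv
          · simp at hv⟩
  | phase2b msgs mb mv a0 b0 v0 h1 h2 =>
      have hstep := SDPStep.phase2b (Quorum := Quorum) msgs mb mv a0 b0 v0 h1 h2
      have hmbg : ∀ a b, mbGE mb a b → mbGE (Function.update mb a0 (some b0)) a b :=
        fun a b hg => step_mbGE hstep hg
      have hnewvote : ∀ a b v, M.msg2b a b v ∈ ({M.msg2b a0 b0 v0} : Set (M A V)) →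
          a = a0 ∧ b = b0 ∧ v = v0 := by
        intro a b v hv
        simpa [M.msg2b.injEq] using hv
      constructor
      · intro a b w hw
        rcases hw with hw | hw
        · obtain ⟨x1, x2, x3⟩ := hinv.i1 a b w hw
          refine ⟨hmbg a b x1, fun bv vv he => ?_, fun he b'' v'' hlt hv => ?_⟩
          · obtain ⟨y1, y2, y3⟩ := x2 bv vv he
            refine ⟨Or.inl y1, y2, fun b'' v'' hg1 hg2 hv => ?_⟩
            rcases hv with hv | hv
            · exact y3 b'' v'' hg1 hg2 hv
            · obtain ⟨rfl, rfl, rfl⟩ := hnewvote _ _ _ hv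
              obtain ⟨bb, hbb, hle⟩ := x1
              have := optLE_some_le h2 hbb
              omega
          · rcases hv with hv | hv
            · exact x3 he b'' v'' hlt hv
            · obtain ⟨rfl, rfl, rfl⟩ := hnewvote _ _ _ hv
              obtain ⟨bb, hbb, hle⟩ := x1
              have := optLE_some_le h2 hbb
              omega
        · simp at hw
      · intro a b w w' hw hw'
        rcases hw with hw | hw
        · rcases hw' with hw' | hw'
          · exact hinv.i1u a b w w' hw hw'
          · simp at hw'
        · simp at hw
      · intro b v hv
        rcases hv with hv | hv
        · exact step_safeAt hstep (hinv.i2a b v hv)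
        · simp at hv
      · intro b v v' hv hv'
        rcases hv with hv | hv
        · rcases hv' with hv' | hv'
          · exact hinv.i2au b v v' hv hv'
          · simp at hv'
        · simp at hv
      · intro a b v hv
        rcases hv with hv | hv
        · obtain ⟨x1, x2⟩ := hinv.i2b a b v hv
          exact ⟨Or.inl x1, hmbg a b x2⟩
        · obtain ⟨rfl, rfl, rfl⟩ := hnewvote _ _ _ hv
          exact ⟨Or.inl h1, b, by simp, le_refl _⟩
      · intro a ha b v hv
        have ha' : Function.update mv a0 (some (b0, v0)) a = none := ha
        by_cases hea : a = a0
        · subst hea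
          simp at ha'
        · rw [Function.update_of_ne hea] at ha'
          rcases hv with hv | hv
          · exact hinv.imvn a ha' b v hv
          · exact hea (hnewvote _ _ _ hv).1
      · intro a b v ha
        have ha' : Function.update mv a0 (some (b0, v0)) a = some (b, v) := ha
        by_cases hea : a = a0
        · subst hea
          rw [Function.update_self] at ha'
          obtain ⟨rfl, rfl⟩ : b = b0 ∧ v = v0 := by
            simpa [Prod.ext_iff] using ha'.symm
          refine ⟨Or.inr rfl, ⟨b, by simp, le_refl _⟩, ?_⟩
          intro b'' v'' hgt hv
          rcases hv with hv | hv
          · obtain ⟨_, bb, hbb, hle⟩ := hinv.i2b a b'' v'' hv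
            have := optLE_some_le h2 hbb
            omega
          · obtain ⟨_, rfl, _⟩ := hnewvote _ _ _ hv
            omega
        · rw [Function.update_of_ne hea] at ha'
          obtain ⟨x1, x2, x3⟩ := hinv.imvs a b v ha'
          refine ⟨Or.inl x1, hmbg a b x2, fun b'' v'' hgt hv => ?_⟩
          rcases hv with hv | hv
          · exact x3 b'' v'' hgt hv
          · exact hea (hnewvote _ _ _ hv).1

lemma paxInv_init : PaxInv Quorum (SDPInit A V) := by
  constructor <;> intros <;> simp_all [SDPInit]

lemma sdpl_step_cases {n : ℕ} {x y : (Fin n → ℕ) × SDPState A V}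
    (h : SDPLStep Quorum n x y) : x.2 = y.2 ∨ SDPStep Quorum x.2 y.2 := by
  cases h with
  | inc => exact Or.inl rfl
  | ruleA _ _ _ _ _ _ _ hstep => exact Or.inr hstep
  | ruleB _ _ _ _ _ _ _ hstep => exact Or.inr hstep

lemma reach_inv {n : ℕ}
    (hQ : ∀ Q1 Q2 : Set A, Quorum Q1 → Quorum Q2 → ∃ a, a ∈ Q1 ∧ a ∈ Q2)
    {x : (Fin n → ℕ) × SDPState A V}
    (h : Relation.ReflTransGen (SDPLStep Quorum n) (SDPLInit A V n) x) :
    PaxInv Quorum x.2 := by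
  induction h with
  | refl => exact paxInv_init
  | tail _ hstep ih =>
      rcases sdpl_step_cases hstep with he | hs
      · exact he ▸ ih
      · exact paxInv_preserved hQ hs ih

lemma sdp_consistency_of_inv {s : SDPState A V}
    (hQ : ∀ Q1 Q2 : Set A, Quorum Q1 → Quorum Q2 → ∃ a, a ∈ Q1 ∧ a ∈ Q2)
    (hinv : PaxInv Quorum s) {v1 v2 : V}
    (h1 : Chosen Quorum s.1 v1) (h2 : Chosen Quorum s.1 v2) : v1 = v2 := by
  obtain ⟨b1, Q1, hq1, hall1⟩ := h1
  obtain ⟨b2, Q2, hq2, hall2⟩ := h2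
  -- get msg2a for both
  obtain ⟨a1, ha1, _⟩ := hQ Q1 Q1 hq1 hq1
  obtain ⟨a2, ha2, _⟩ := hQ Q2 Q2 hq2 hq2
  have h2a1 : M.msg2a b1 v1 ∈ s.1 := (hinv.i2b a1 b1 v1 (hall1 a1 ha1)).1
  have h2a2 : M.msg2a b2 v2 ∈ s.1 := (hinv.i2b a2 b2 v2 (hall2 a2 ha2)).1
  have key : ∀ (ba bb : ℕ) (va vb : V) (Qa : Set A), ba < bb → Quorum Qa →
      (∀ a ∈ Qa, M.msg2b a ba va ∈ s.1) → M.msg2a bb vb ∈ s.1 → va = vb := by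
    intro ba bb va vb Qa hlt hqa halla h2ab
    obtain ⟨Qb, hqb, hallb⟩ := hinv.i2a bb vb h2ab ba hlt
    obtain ⟨a, haQa, haQb⟩ := hQ Qa Qb hqa hqb
    rcases hallb a haQb with hv | hw
    · have x1 := (hinv.i2b a ba va (halla a haQa)).1
      have x2 := (hinv.i2b a ba vb hv).1
      exact hinv.i2au ba va vb x1 x2
    · exact absurd (halla a haQa) (hw.1 va)
  rcases lt_trichotomy b1 b2 with hlt | heq | hgt
  · exact key b1 b2 v1 v2 Q1 hlt hq1 hall1 h2a2
  · subst heq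
    exact hinv.i2au b1 v1 v2 h2a1 h2a2
  · exact (key b2 b1 v2 v1 Q2 hgt hq2 hall2 h2a1).symm

end PaxosAux

/-- Consistency of the lifted Paxos model: if a state is reachable in the lifted model from
the lifted initial state and both `v1` and `v2` are chosen, then `v1 = v2`. -/
theorem sdpl_consistency {A V : Type} [DecidableEq A] (Quorum : Set A → Prop)
    (hQ : ∀ Q1 Q2 : Set A, Quorum Q1 → Quorum Q2 → ∃ a, a ∈ Q1 ∧ a ∈ Q2)
    (n : ℕ) (hn : 0 < n) (ctr : Fin n → ℕ)
    (msgs : Set (M A V)) (maxBal : A → Option ℕ) (maxVal : A → Option (ℕ × V))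
    (v1 v2 : V)
    (hreach : Relation.ReflTransGen (SDPLStep Quorum n) (SDPLInit A V n)
        (ctr, (msgs, maxBal, maxVal)))
    (h1 : Chosen Quorum msgs v1) (h2 : Chosen Quorum msgs v2) :
    v1 = v2 := by
  have hinv : PaxInv Quorum ((msgs, maxBal, maxVal) : SDPState A V) :=
    reach_inv hQ hreach
  exact sdp_consistency_of_inv hQ hinv h1 h2
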